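/- Let μ be a probability measure on ℝ^d with ∫ ‖x‖² dμ(x) < ∞, let φ : ℝ^d → ℝ be a convex differentiable function whose gradient T = ∇φ is measurable and satisfies ∫ ‖T(x)‖² dμ(x) < ∞. For a_1, b_1, a_2, b_2 ≥ 0 define S_1(x) := a_1 x + b_1 T(x) and S_2(x) := a_2 x + b_2 T(x). Then the infimum of ∫ ‖x − y‖² dγ(x,y) over all couplings γ of the pushforward measures (S_1)_#μ and (S_2)_#μ equals ∫ ‖S_1(x) − S_2(x)‖² dμ(x), i.e., equals ∫ ‖(a_1 − a_2)x + (b_1 − b_2)T(x)‖² dμ(x), and this infimum is attained by the coupling (S_1, S_2)_#μ. -/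

import Mathlib

open MeasureTheory
open scoped ENNReal

variable {E : Type*} [NormedAddCommGroup E] [InnerProductSpace ℝ E] [CompleteSpace E]

lemma grad_le {φ : E → ℝ} (hconv : ConvexOn ℝ Set.univ φ) (hdiff : Differentiable ℝ φ) (x y : E) :
    φ x + inner ℝ (gradient φ x) (y - x) ≤ φ y := by
  set c : ℝ → E := fun t => (1 - t) • x + t • y with hc_def
  have hceq : c = fun t => (AffineMap.lineMap x y : ℝ →ᵃ[ℝ] E) t := by
    funext t; simp [hc_def, AffineMap.lineMap_apply_module]
  have hg : ConvexOn ℝ Set.univ (φ ∘ c) := by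
    rw [hceq]
    simpa using hconv.comp_affineMap (AffineMap.lineMap x y)
  have hc0 : c 0 = x := by simp [hc_def]
  have hc1 : c 1 = y := by simp [hc_def]
  have hcd : HasDerivAt c (y - x) 0 := by
    have h1 : HasDerivAt (fun t : ℝ => (1 - t) • x) ((-1 : ℝ) • x) 0 := by
      simpa using ((hasDerivAt_id (0:ℝ)).const_sub 1).smul_const x
    have h2 : HasDerivAt (fun t : ℝ => t • y) ((1:ℝ) • y) 0 := by
      simpa using (hasDerivAt_id (0:ℝ)).smul_const y
    have := h1.add h2
    have heq : (-1 : ℝ) • x + (1:ℝ) • y = y - x := by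
      simp [neg_smul, one_smul]; abel
    rw [heq] at this
    exact this
  have hfd : HasFDerivAt φ (InnerProductSpace.toDual ℝ E (gradient φ x)) (c 0) := by
    rw [hc0]
    exact hasGradientAt_iff_hasFDerivAt.mp (hdiff x).hasGradientAt
  have hcomp : HasDerivAt (φ ∘ c) (inner ℝ (gradient φ x) (y - x)) 0 := by
    have := hfd.comp_hasDerivAt 0 hcd
    simpa [InnerProductSpace.toDual_apply_apply] using this
  have hslope := hg.le_slope_of_hasDerivAt (Set.mem_univ (0:ℝ)) (Set.mem_univ (1:ℝ))
    one_pos hcomp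
  rw [slope_def_field] at hslope
  simp only [Function.comp_apply, hc0, hc1] at hslope
  have : inner ℝ (gradient φ x) (y - x) ≤ φ y - φ x := by
    simpa [div_one] using hslope
  linarith

section main
variable (T : E → E) (a₁ b₁ a₂ b₂ : ℝ)

/-- the two potentials -/
noncomputable def Fpot (φ : E → ℝ) : E → ℝ := fun x =>
  (a₁*a₂/2) * ‖x‖^2 + (a₁*b₂) * φ x + (a₂*b₁) * (inner ℝ x (T x) - φ x) + (b₁*b₂/2) * ‖T x‖^2

noncomputable def Gpot (φ : E → ℝ) : E → ℝ := fun x =>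
  (a₁*a₂/2) * ‖x‖^2 + (a₁*b₂) * (inner ℝ x (T x) - φ x) + (a₂*b₁) * φ x + (b₁*b₂/2) * ‖T x‖^2

lemma FG_add (φ : E → ℝ) (S₁ S₂ : E → E)
    (hS₁ : ∀ x, S₁ x = a₁ • x + b₁ • T x) (hS₂ : ∀ x, S₂ x = a₂ • x + b₂ • T x) (x : E) :
    Fpot T a₁ b₁ a₂ b₂ φ x + Gpot T a₁ b₁ a₂ b₂ φ x = inner ℝ (S₁ x) (S₂ x) := by
  rw [hS₁, hS₂]
  simp only [Fpot, Gpot, inner_add_left, inner_add_right, real_inner_smul_left,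
    real_inner_smul_right]
  rw [real_inner_self_eq_norm_sq, real_inner_self_eq_norm_sq, real_inner_comm (T x) x]
  ring

lemma inner_expand (S₁ S₂ : E → E)
    (hS₁ : ∀ x, S₁ x = a₁ • x + b₁ • T x) (hS₂ : ∀ x, S₂ x = a₂ • x + b₂ • T x) (x y : E) :
    (inner ℝ (S₁ x) (S₂ y) : ℝ) =
      a₁*a₂*inner ℝ x y + a₁*b₂*inner ℝ x (T y) + a₂*b₁*inner ℝ (T x) y + b₁*b₂*inner ℝ (T x) (T y) := by
  rw [hS₁, hS₂]
  simp only [inner_add_left, inner_add_right, real_inner_smul_left, real_inner_smul_right]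
  ring

lemma star_ineq {φ : E → ℝ} (hconv : ConvexOn ℝ Set.univ φ) (hdiff : Differentiable ℝ φ)
    (ha₁ : 0 ≤ a₁) (hb₁ : 0 ≤ b₁) (ha₂ : 0 ≤ a₂) (hb₂ : 0 ≤ b₂)
    (hT : T = gradient φ) (S₁ S₂ : E → E)
    (hS₁ : ∀ x, S₁ x = a₁ • x + b₁ • T x) (hS₂ : ∀ x, S₂ x = a₂ • x + b₂ • T x) (x y : E) :
    (inner ℝ (S₁ x) (S₂ y) : ℝ) ≤ Fpot T a₁ b₁ a₂ b₂ φ x + Gpot T a₁ b₁ a₂ b₂ φ y := by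
  have hgrad : ∀ u v : E, φ u + inner ℝ (T u) (v - u) ≤ φ v := by
    intro u v; rw [hT]; exact grad_le hconv hdiff u v
  have h1 : (inner ℝ x y : ℝ) ≤ ‖x‖^2/2 + ‖y‖^2/2 := by
    have h := norm_sub_sq_real x y
    nlinarith [sq_nonneg ‖x - y‖]
  have h2 : (inner ℝ (T x) (T y) : ℝ) ≤ ‖T x‖^2/2 + ‖T y‖^2/2 := by
    have h := norm_sub_sq_real (T x) (T y)
    nlinarith [sq_nonneg ‖T x - T y‖]
  have c1 : (inner ℝ x (T y) : ℝ) = inner ℝ (T y) x := real_inner_comm _ _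
  have c2 : (inner ℝ y (T y) : ℝ) = inner ℝ (T y) y := real_inner_comm _ _
  have c3 : (inner ℝ x (T x) : ℝ) = inner ℝ (T x) x := real_inner_comm _ _
  have h3 : (inner ℝ x (T y) : ℝ) - inner ℝ y (T y) ≤ φ x - φ y := by
    have h := hgrad y x
    rw [inner_sub_right] at h
    linarith
  have h4 : (inner ℝ (T x) y : ℝ) - inner ℝ (T x) x ≤ φ y - φ x := by
    have h := hgrad x y
    rw [inner_sub_right] at h
    linarith
  have e := inner_expand T a₁ b₁ a₂ b₂ S₁ S₂ hS₁ hS₂ x y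
  have k1 := mul_le_mul_of_nonneg_left h1 (mul_nonneg ha₁ ha₂)
  have k2 := mul_le_mul_of_nonneg_left h2 (mul_nonneg hb₁ hb₂)
  have k3 := mul_le_mul_of_nonneg_left h3 (mul_nonneg ha₁ hb₂)
  have k4 := mul_le_mul_of_nonneg_left h4 (mul_nonneg ha₂ hb₁)
  simp only [Fpot, Gpot]
  have k5 : a₂ * b₁ * (inner ℝ x (T x) : ℝ) = a₂ * b₁ * inner ℝ (T x) x := by rw [c3]
  rw [e]
  linarith [k1, k2, k3, k4, k5]

end main

section dual
variable {E : Type*} [NormedAddCommGroup E] [InnerProductSpace ℝ E]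
  [MeasurableSpace E] [OpensMeasurableSpace E]

noncomputable def fdual (S₂ : E → E) (G : E → ℝ) : E → EReal :=
  fun u => ⨆ y : E, (((inner ℝ u (S₂ y) : ℝ) - G y : ℝ) : EReal)

noncomputable def gdual (f : E → EReal) : E → EReal :=
  fun v => ⨆ u : E, ((((inner ℝ u v : ℝ)) : EReal) - f u)

lemma fdual_lb (S₂ : E → E) (G : E → ℝ) (u : E) (y : E) :
    (((inner ℝ u (S₂ y) : ℝ) - G y : ℝ) : EReal) ≤ fdual S₂ G u :=
  le_iSup (fun y => (((inner ℝ u (S₂ y) : ℝ) - G y : ℝ) : EReal)) y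

lemma fdual_ne_bot (S₂ : E → E) (G : E → ℝ) (u : E) : fdual S₂ G u ≠ ⊥ :=
  fun h => by
    have h1 := fdual_lb S₂ G u u
    rw [h, le_bot_iff] at h1
    exact EReal.coe_ne_bot _ h1

lemma gdual_lb (f : E → EReal) (v u : E) :
    ((((inner ℝ u v : ℝ)) : EReal) - f u) ≤ gdual f v :=
  le_iSup (fun u => ((((inner ℝ u v : ℝ)) : EReal) - f u)) u

lemma measurable_fdual (S₂ : E → E) (G : E → ℝ) : Measurable (fdual S₂ G) := by
  apply LowerSemicontinuous.measurable
  apply lowerSemicontinuous_iSup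
  intro y
  apply Continuous.lowerSemicontinuous
  exact continuous_coe_real_ereal.comp ((continuous_id.inner continuous_const).sub
    continuous_const)

lemma measurable_gdual (f : E → EReal) (hf : ∀ u, f u ≠ ⊥) : Measurable (gdual f) := by
  apply LowerSemicontinuous.measurable
  apply lowerSemicontinuous_iSup
  intro u
  by_cases hu : f u = ⊤
  · have : (fun v : E => ((((inner ℝ u v : ℝ)) : EReal) - f u)) = fun _ => (⊥ : EReal) := by
      funext v; rw [hu, EReal.sub_top]
    rw [this]
    exact lowerSemicontinuous_const
  · have hrepr : f u = (((f u).toReal : ℝ) : EReal) := (EReal.coe_toReal hu (hf u)).symm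
    have : (fun v : E => ((((inner ℝ u v : ℝ)) : EReal) - f u))
        = fun v : E => (((inner ℝ u v - (f u).toReal : ℝ)) : EReal) := by
      funext v; rw [EReal.coe_sub]; rw [← hrepr]
    rw [this]
    apply Continuous.lowerSemicontinuous
    exact continuous_coe_real_ereal.comp ((continuous_const.inner continuous_id).sub
      continuous_const)

variable (S₁ S₂ : E → E) (F G : E → ℝ)
  (hFG : ∀ x, F x + G x = inner ℝ (S₁ x) (S₂ x))
  (hstar : ∀ x y, (inner ℝ (S₁ x) (S₂ y) : ℝ) ≤ F x + G y)

include hFG hstar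

lemma fdual_comp_eq (x : E) : fdual S₂ G (S₁ x) = (F x : EReal) := by
  apply le_antisymm
  · apply iSup_le
    intro y
    rw [show (((inner ℝ (S₁ x) (S₂ y) : ℝ) - G y : ℝ) : EReal) ≤ (F x : EReal)
      ↔ ((inner ℝ (S₁ x) (S₂ y) : ℝ) - G y : ℝ) ≤ F x from EReal.coe_le_coe_iff]
    have := hstar x y; linarith
  · have h := fdual_lb S₂ G (S₁ x) x
    have e : (inner ℝ (S₁ x) (S₂ x) : ℝ) - G x = F x := by have := hFG x; linarith
    rwa [e] at h

lemma gdual_comp_le (x : E) : gdual (fdual S₂ G) (S₂ x) ≤ (G x : EReal) := by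
  apply iSup_le
  intro u
  by_cases hu : fdual S₂ G u = ⊤
  · rw [hu, EReal.sub_top]; exact bot_le
  · have h1 := fdual_lb S₂ G u x
    calc (((inner ℝ u (S₂ x) : ℝ)) : EReal) - fdual S₂ G u
        ≤ (((inner ℝ u (S₂ x) : ℝ)) : EReal) - (((inner ℝ u (S₂ x) : ℝ) - G x : ℝ) : EReal) :=
          EReal.sub_le_sub le_rfl h1
      _ = (G x : EReal) := by rw [← EReal.coe_sub]; norm_cast; ring

lemma gdual_comp_eq (x : E) : gdual (fdual S₂ G) (S₂ x) = (G x : EReal) := by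
  refine le_antisymm (gdual_comp_le S₁ S₂ F G hFG hstar x) ?_
  have h := gdual_lb (fdual S₂ G) (S₂ x) (S₁ x)
  rw [fdual_comp_eq S₁ S₂ F G hFG hstar x, ← EReal.coe_sub] at h
  have e : (inner ℝ (S₁ x) (S₂ x) : ℝ) - F x = G x := by have := hFG x; linarith
  rwa [e] at h

lemma gdual_ne_bot (v : E) : gdual (fdual S₂ G) v ≠ ⊥ := by
  intro h
  have h1 := gdual_lb (fdual S₂ G) v (S₁ 0)
  rw [fdual_comp_eq S₁ S₂ F G hFG hstar 0, ← EReal.coe_sub, h] at h1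
  rw [le_bot_iff] at h1
  exact EReal.coe_ne_bot _ h1

lemma dual_ineq (u v : E) (hu : fdual S₂ G u ≠ ⊤) (hv : gdual (fdual S₂ G) v ≠ ⊤) :
    (inner ℝ u v : ℝ) ≤ (fdual S₂ G u).toReal + (gdual (fdual S₂ G) v).toReal := by
  have hub : fdual S₂ G u ≠ ⊥ := fdual_ne_bot S₂ G u
  have hvb : gdual (fdual S₂ G) v ≠ ⊥ := gdual_ne_bot S₁ S₂ F G hFG hstar v
  have h := gdual_lb (fdual S₂ G) v u
  rw [← EReal.coe_toReal hu hub, ← EReal.coe_toReal hv hvb, ← EReal.coe_sub] at h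
  rw [EReal.coe_le_coe_iff] at h
  linarith

end dual

theorem nearest_coupling_on_filling_cone
    (d : ℕ) (μ : Measure (EuclideanSpace ℝ (Fin d))) [IsProbabilityMeasure μ]
    (hμ2 : ∫⁻ x, ENNReal.ofReal (‖x‖ ^ 2) ∂μ < ⊤)
    (φ : EuclideanSpace ℝ (Fin d) → ℝ)
    (hconv : ConvexOn ℝ Set.univ φ) (hdiff : Differentiable ℝ φ)
    (hTmeas : Measurable fun x => gradient φ x)
    (hT2 : ∫⁻ x, ENNReal.ofReal (‖gradient φ x‖ ^ 2) ∂μ < ⊤)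
    (a₁ b₁ a₂ b₂ : ℝ) (ha₁ : 0 ≤ a₁) (hb₁ : 0 ≤ b₁) (ha₂ : 0 ≤ a₂) (hb₂ : 0 ≤ b₂)
    (S₁ S₂ : EuclideanSpace ℝ (Fin d) → EuclideanSpace ℝ (Fin d))
    (hS₁ : ∀ x, S₁ x = a₁ • x + b₁ • gradient φ x)
    (hS₂ : ∀ x, S₂ x = a₂ • x + b₂ • gradient φ x) :
    sInf {c : ℝ≥0∞ |
        ∃ γ : Measure (EuclideanSpace ℝ (Fin d) × EuclideanSpace ℝ (Fin d)),
          IsProbabilityMeasure γ ∧ γ.map Prod.fst = μ.map S₁ ∧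
          γ.map Prod.snd = μ.map S₂ ∧
          c = ∫⁻ p, ENNReal.ofReal (‖p.1 - p.2‖ ^ 2) ∂γ}
      = ∫⁻ x, ENNReal.ofReal (‖S₁ x - S₂ x‖ ^ 2) ∂μ
    ∧ (∫⁻ x, ENNReal.ofReal (‖S₁ x - S₂ x‖ ^ 2) ∂μ
        = ∫⁻ x, ENNReal.ofReal (‖(a₁ - a₂) • x + (b₁ - b₂) • gradient φ x‖ ^ 2) ∂μ)
    ∧ ((μ.map fun x => (S₁ x, S₂ x)).map Prod.fst = μ.map S₁)
    ∧ ((μ.map fun x => (S₁ x, S₂ x)).map Prod.snd = μ.map S₂)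
    ∧ (∫⁻ p, ENNReal.ofReal (‖p.1 - p.2‖ ^ 2) ∂(μ.map fun x => (S₁ x, S₂ x))
        = ∫⁻ x, ENNReal.ofReal (‖S₁ x - S₂ x‖ ^ 2) ∂μ) := by
  classical
  let E := EuclideanSpace ℝ (Fin d)
  set T : E → E := gradient φ with hT
  have hTm : Measurable T := hTmeas
  have hS₁m : Measurable S₁ := by
    have he : S₁ = fun x => a₁ • x + b₁ • T x := funext hS₁
    rw [he]; exact (measurable_id.const_smul a₁).add (hTm.const_smul b₁)
  have hS₂m : Measurable S₂ := by
    have he : S₂ = fun x => a₂ • x + b₂ • T x := funext hS₂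
    rw [he]; exact (measurable_id.const_smul a₂).add (hTm.const_smul b₂)
  set Fp : E → ℝ := Fpot T a₁ b₁ a₂ b₂ φ with hFp
  set Gp : E → ℝ := Gpot T a₁ b₁ a₂ b₂ φ with hGp
  have hFG : ∀ x, Fp x + Gp x = inner ℝ (S₁ x) (S₂ x) :=
    FG_add T a₁ b₁ a₂ b₂ φ S₁ S₂ hS₁ hS₂
  have hst : ∀ x y, (inner ℝ (S₁ x) (S₂ y) : ℝ) ≤ Fp x + Gp y :=
    star_ineq T a₁ b₁ a₂ b₂ hconv hdiff ha₁ hb₁ ha₂ hb₂ hT S₁ S₂ hS₁ hS₂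
  have hgrad : ∀ x y : E, φ x + inner ℝ (T x) (y - x) ≤ φ y := by
    intro x y; rw [hT]; exact grad_le hconv hdiff x y
  -- integrability infrastructure
  have hn2 : Integrable (fun x : E => ‖x‖ ^ 2) μ := by
    refine ⟨((continuous_norm).pow 2).aestronglyMeasurable, ?_⟩
    rw [hasFiniteIntegral_iff_ofReal (ae_of_all _ fun x => by positivity)]
    exact hμ2
  have ht2 : Integrable (fun x : E => ‖T x‖ ^ 2) μ := by
    refine ⟨(hTm.norm.pow_const 2).aestronglyMeasurable, ?_⟩
    rw [hasFiniteIntegral_iff_ofReal (ae_of_all _ fun x => by positivity)]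
    exact hT2
  have hP : Integrable (fun x : E => 1 + ‖x‖ ^ 2 + ‖T x‖ ^ 2) μ :=
    ((integrable_const 1).add hn2).add ht2
  have key_int : ∀ f : E → ℝ, Measurable f →
      (∃ C, ∀ x, |f x| ≤ C * (1 + ‖x‖ ^ 2 + ‖T x‖ ^ 2)) → Integrable f μ := by
    rintro f hm ⟨C, hC⟩
    refine Integrable.mono' (hP.const_mul C) hm.aestronglyMeasurable
      (ae_of_all _ fun x => ?_)
    rw [Real.norm_eq_abs]; exact hC x
  have hφint : Integrable φ μ := by
    refine key_int φ hdiff.continuous.measurable ⟨|φ 0| + ‖T 0‖ + 1, fun x => ?_⟩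
    have hup : φ x ≤ φ 0 + ‖x‖ * ‖T x‖ := by
      have h := hgrad x 0
      have h2 : (inner ℝ (T x) (0 - x) : ℝ) = - inner ℝ (T x) x := by
        rw [zero_sub, inner_neg_right]
      rw [h2] at h
      have h3 : (inner ℝ (T x) x : ℝ) ≤ ‖T x‖ * ‖x‖ := real_inner_le_norm _ _
      nlinarith
    have hlo : φ 0 - ‖T 0‖ * ‖x‖ ≤ φ x := by
      have h := hgrad 0 x
      rw [sub_zero] at h
      have h3 : |(inner ℝ (T 0) x : ℝ)| ≤ ‖T 0‖ * ‖x‖ := abs_real_inner_le_norm _ _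
      have h4 := neg_abs_le (inner ℝ (T 0) x : ℝ)
      linarith
    have e1 : ‖x‖ * ‖T x‖ ≤ (‖x‖^2 + ‖T x‖^2)/2 := by nlinarith [sq_nonneg (‖x‖ - ‖T x‖)]
    have e2 : (0:ℝ) ≤ ‖x‖^2 := sq_nonneg _
    have e3 : (0:ℝ) ≤ ‖T x‖^2 := sq_nonneg _
    have p1 : (0:ℝ) ≤ |φ 0| * (‖x‖^2 + ‖T x‖^2) :=
      mul_nonneg (abs_nonneg _) (by linarith)
    have q0 : ‖x‖ ≤ 1 + ‖x‖^2 := by nlinarith [sq_nonneg (‖x‖ - 1)]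
    have q1 : ‖T 0‖ * ‖x‖ ≤ ‖T 0‖ * (1 + ‖x‖^2) :=
      mul_le_mul_of_nonneg_left q0 (norm_nonneg _)
    have p2 : (0:ℝ) ≤ ‖T 0‖ * (1 + ‖x‖^2 + ‖T x‖^2) :=
      mul_nonneg (norm_nonneg _) (by linarith)
    have p3 : (0:ℝ) ≤ ‖T 0‖ * ‖T x‖^2 := mul_nonneg (norm_nonneg _) e3
    rw [abs_le]
    constructor
    · linarith [le_abs_self (φ 0), neg_abs_le (φ 0), q1, p1, p3]
    · linarith [le_abs_self (φ 0), e1, p1, p2]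
  have hxT : Integrable (fun x : E => (inner ℝ x (T x) : ℝ)) μ := by
    refine key_int _ (measurable_id.inner hTm) ⟨1, fun x => ?_⟩
    have h := abs_real_inner_le_norm x (T x)
    nlinarith [sq_nonneg (‖x‖ - ‖T x‖), norm_nonneg x, norm_nonneg (T x)]
  have hFi : Integrable Fp μ := by
    rw [hFp]
    show Integrable (fun x => (a₁*a₂/2) * ‖x‖^2 + (a₁*b₂) * φ x
      + (a₂*b₁) * ((inner ℝ x (T x) : ℝ) - φ x) + (b₁*b₂/2) * ‖T x‖^2) μ
    exact (((hn2.const_mul _).add (hφint.const_mul _)).add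
      ((hxT.sub hφint).const_mul _)).add (ht2.const_mul _)
  have hGi : Integrable Gp μ := by
    rw [hGp]
    show Integrable (fun x => (a₁*a₂/2) * ‖x‖^2 + (a₁*b₂) * ((inner ℝ x (T x) : ℝ) - φ x)
      + (a₂*b₁) * φ x + (b₁*b₂/2) * ‖T x‖^2) μ
    exact (((hn2.const_mul _).add ((hxT.sub hφint).const_mul _)).add
      (hφint.const_mul _)).add (ht2.const_mul _)
  have hIP : Integrable (fun x : E => (inner ℝ (S₁ x) (S₂ x) : ℝ)) μ := by
    have he : (fun x : E => (inner ℝ (S₁ x) (S₂ x) : ℝ)) = fun x => Fp x + Gp x := by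
      funext x; rw [hFG x]
    rw [he]; exact hFi.add hGi
  have hsq_bound : ∀ (a b : ℝ) (S : E → E), 0 ≤ a → 0 ≤ b →
      (∀ x, S x = a • x + b • T x) → Integrable (fun x => ‖S x‖ ^ 2) μ := by
    intro a b S ha hb hS
    have hSm : Measurable S := by
      have he : S = fun x => a • x + b • T x := funext hS
      rw [he]; exact (measurable_id.const_smul a).add (hTm.const_smul b)
    refine key_int _ (hSm.norm.pow_const 2) ⟨2*a^2 + 2*b^2, fun x => ?_⟩
    have h : ‖S x‖ ≤ a * ‖x‖ + b * ‖T x‖ := by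
      rw [hS]
      refine (norm_add_le _ _).trans ?_
      rw [norm_smul, norm_smul, Real.norm_eq_abs, Real.norm_eq_abs,
        abs_of_nonneg ha, abs_of_nonneg hb]
    have h2 : ‖S x‖ ^ 2 ≤ (a * ‖x‖ + b * ‖T x‖) ^ 2 :=
      pow_le_pow_left₀ (norm_nonneg _) h 2
    rw [abs_of_nonneg (sq_nonneg _)]
    nlinarith [sq_nonneg (a * ‖x‖ - b * ‖T x‖), sq_nonneg (a * ‖T x‖), sq_nonneg (b * ‖x‖),
      sq_nonneg a, sq_nonneg b]
  have hs1sq : Integrable (fun x => ‖S₁ x‖ ^ 2) μ := hsq_bound a₁ b₁ S₁ ha₁ hb₁ hS₁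
  have hs2sq : Integrable (fun x => ‖S₂ x‖ ^ 2) μ := hsq_bound a₂ b₂ S₂ ha₂ hb₂ hS₂
  have hWpt : ∀ x, ‖S₁ x - S₂ x‖ ^ 2
      = ‖S₁ x‖ ^ 2 - 2 * inner ℝ (S₁ x) (S₂ x) + ‖S₂ x‖ ^ 2 := fun x =>
    norm_sub_sq_real _ _
  have hWi : Integrable (fun x => ‖S₁ x - S₂ x‖ ^ 2) μ := by
    have he : (fun x => ‖S₁ x - S₂ x‖ ^ 2)
        = fun x => ‖S₁ x‖ ^ 2 - 2 * (inner ℝ (S₁ x) (S₂ x) : ℝ) + ‖S₂ x‖ ^ 2 := funext hWpt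
    rw [he]; exact (hs1sq.sub (hIP.const_mul 2)).add hs2sq
  have hW0 : 0 ≤ᵐ[μ] fun x => ‖S₁ x - S₂ x‖ ^ 2 := ae_of_all _ fun x => sq_nonneg _
  have hLeq : ENNReal.ofReal (∫ x, ‖S₁ x - S₂ x‖ ^ 2 ∂μ)
      = ∫⁻ x, ENNReal.ofReal (‖S₁ x - S₂ x‖ ^ 2) ∂μ :=
    ofReal_integral_eq_lintegral_ofReal hWi hW0
  -- dual potentials
  set fE : E → EReal := fdual S₂ Gp with hfE
  set gE : E → EReal := gdual fE with hgE
  have hfm : Measurable fE := measurable_fdual S₂ Gp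
  have hgm : Measurable gE := measurable_gdual fE (fdual_ne_bot S₂ Gp)
  have hfeq : ∀ x, fE (S₁ x) = (Fp x : EReal) := fdual_comp_eq S₁ S₂ Fp Gp hFG hst
  have hgeq : ∀ x, gE (S₂ x) = (Gp x : EReal) := gdual_comp_eq S₁ S₂ Fp Gp hFG hst
  have hdualI : ∀ u v, fE u ≠ ⊤ → gE v ≠ ⊤ →
      (inner ℝ u v : ℝ) ≤ (fE u).toReal + (gE v).toReal := dual_ineq S₁ S₂ Fp Gp hFG hst
  set hfun : E → ℝ := fun u => ‖u‖ ^ 2 - 2 * (fE u).toReal with hhfun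
  set kfun : E → ℝ := fun v => ‖v‖ ^ 2 - 2 * (gE v).toReal with hkfun
  have hfunm : Measurable hfun := (measurable_norm.pow_const 2).sub
    (hfm.ereal_toReal.const_mul 2)
  have hkunm : Measurable kfun := (measurable_norm.pow_const 2).sub
    (hgm.ereal_toReal.const_mul 2)
  have hfcomp : ∀ x, hfun (S₁ x) = ‖S₁ x‖ ^ 2 - 2 * Fp x := by
    intro x; rw [hhfun]; simp only; rw [hfeq x, EReal.toReal_coe]
  have hkcomp : ∀ x, kfun (S₂ x) = ‖S₂ x‖ ^ 2 - 2 * Gp x := by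
    intro x; rw [hkfun]; simp only; rw [hgeq x, EReal.toReal_coe]
  have hfint1 : Integrable hfun (μ.map S₁) := by
    rw [integrable_map_measure hfunm.aestronglyMeasurable hS₁m.aemeasurable]
    have he : hfun ∘ S₁ = fun x => ‖S₁ x‖ ^ 2 - 2 * Fp x := funext hfcomp
    rw [he]; exact hs1sq.sub (hFi.const_mul 2)
  have hkint1 : Integrable kfun (μ.map S₂) := by
    rw [integrable_map_measure hkunm.aestronglyMeasurable hS₂m.aemeasurable]
    have he : kfun ∘ S₂ = fun x => ‖S₂ x‖ ^ 2 - 2 * Gp x := funext hkcomp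
    rw [he]; exact hs2sq.sub (hGi.const_mul 2)
  have hfint_eq : ∫ u, hfun u ∂(μ.map S₁) = ∫ x, (‖S₁ x‖ ^ 2 - 2 * Fp x) ∂μ := by
    rw [integral_map hS₁m.aemeasurable hfunm.aestronglyMeasurable]
    exact integral_congr_ae (ae_of_all _ hfcomp)
  have hkint_eq : ∫ v, kfun v ∂(μ.map S₂) = ∫ x, (‖S₂ x‖ ^ 2 - 2 * Gp x) ∂μ := by
    rw [integral_map hS₂m.aemeasurable hkunm.aestronglyMeasurable]
    exact integral_congr_ae (ae_of_all _ hkcomp)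
  have hcostm : Measurable fun p : E × E => ‖p.1 - p.2‖ ^ 2 :=
    (measurable_fst.sub measurable_snd).norm.pow_const 2
  -- the lower bound for an arbitrary coupling
  have hlow : ∀ γ : Measure (E × E), IsProbabilityMeasure γ →
      γ.map Prod.fst = μ.map S₁ → γ.map Prod.snd = μ.map S₂ →
      (∫⁻ x, ENNReal.ofReal (‖S₁ x - S₂ x‖ ^ 2) ∂μ)
        ≤ ∫⁻ p, ENNReal.ofReal (‖p.1 - p.2‖ ^ 2) ∂γ := by
    intro γ hγp h1 h2
    by_cases hfin : ∫⁻ p : E × E, ENNReal.ofReal (‖p.1 - p.2‖ ^ 2) ∂γ = ⊤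
    · rw [hfin]; exact le_top
    have hcost0 : 0 ≤ᵐ[γ] fun p : E × E => ‖p.1 - p.2‖ ^ 2 :=
      ae_of_all _ fun p => sq_nonneg _
    have hcint : Integrable (fun p : E × E => ‖p.1 - p.2‖ ^ 2) γ := by
      refine ⟨hcostm.aestronglyMeasurable, ?_⟩
      rw [hasFiniteIntegral_iff_ofReal hcost0]
      exact lt_top_iff_ne_top.mpr hfin
    have hHint : Integrable (fun p : E × E => hfun p.1) γ := by
      have := (integrable_map_measure hfunm.aestronglyMeasurable
        measurable_fst.aemeasurable).mp (by rw [h1]; exact hfint1)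
      exact this
    have hKint : Integrable (fun p : E × E => kfun p.2) γ := by
      have := (integrable_map_measure hkunm.aestronglyMeasurable
        measurable_snd.aemeasurable).mp (by rw [h2]; exact hkint1)
      exact this
    have hHeq : ∫ p : E × E, hfun p.1 ∂γ = ∫ u, hfun u ∂(μ.map S₁) := by
      rw [← h1, integral_map measurable_fst.aemeasurable hfunm.aestronglyMeasurable]
    have hKeq : ∫ p : E × E, kfun p.2 ∂γ = ∫ v, kfun v ∂(μ.map S₂) := by
      rw [← h2, integral_map measurable_snd.aemeasurable hkunm.aestronglyMeasurable]
    have hAm : MeasurableSet {u : E | fE u = ⊤} := hfm (measurableSet_singleton ⊤)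
    have hBm : MeasurableSet {v : E | gE v = ⊤} := hgm (measurableSet_singleton ⊤)
    have hA : γ {p : E × E | fE p.1 = ⊤} = 0 := by
      have hpre : {p : E × E | fE p.1 = ⊤} = Prod.fst ⁻¹' {u : E | fE u = ⊤} := rfl
      rw [hpre, ← Measure.map_apply measurable_fst hAm, h1,
        Measure.map_apply hS₁m hAm]
      have : S₁ ⁻¹' {u : E | fE u = ⊤} = ∅ := by
        ext x; simp only [Set.mem_preimage, Set.mem_setOf_eq, Set.mem_empty_iff_false,
          iff_false]
        show fE (S₁ x) ≠ ⊤; rw [hfeq x]; exact EReal.coe_ne_top _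
      rw [this]; exact measure_empty
    have hB : γ {p : E × E | gE p.2 = ⊤} = 0 := by
      have hpre : {p : E × E | gE p.2 = ⊤} = Prod.snd ⁻¹' {v : E | gE v = ⊤} := rfl
      rw [hpre, ← Measure.map_apply measurable_snd hBm, h2,
        Measure.map_apply hS₂m hBm]
      have : S₂ ⁻¹' {v : E | gE v = ⊤} = ∅ := by
        ext x; simp only [Set.mem_preimage, Set.mem_setOf_eq, Set.mem_empty_iff_false,
          iff_false]
        show gE (S₂ x) ≠ ⊤; rw [hgeq x]; exact EReal.coe_ne_top _
      rw [this]; exact measure_empty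
    have hA' : ∀ᵐ p : E × E ∂γ, fE p.1 ≠ ⊤ := by
      rw [ae_iff]; simpa only [ne_eq, not_not] using hA
    have hB' : ∀ᵐ p : E × E ∂γ, gE p.2 ≠ ⊤ := by
      rw [ae_iff]; simpa only [ne_eq, not_not] using hB
    have hae : ∀ᵐ p : E × E ∂γ, hfun p.1 + kfun p.2 ≤ ‖p.1 - p.2‖ ^ 2 := by
      filter_upwards [hA', hB'] with p hp1 hp2
      have hd := hdualI p.1 p.2 hp1 hp2
      have hn := norm_sub_sq_real p.1 p.2
      rw [hhfun, hkfun]; simp only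
      linarith
    have step1 : ∫ p : E × E, (hfun p.1 + kfun p.2) ∂γ ≤ ∫ p : E × E, ‖p.1 - p.2‖ ^ 2 ∂γ :=
      integral_mono_ae (hHint.add hKint) hcint hae
    have step2 : ∫ p : E × E, (hfun p.1 + kfun p.2) ∂γ
        = ∫ p : E × E, hfun p.1 ∂γ + ∫ p : E × E, kfun p.2 ∂γ := integral_add hHint hKint
    have int1 : Integrable (fun x => ‖S₁ x‖ ^ 2 - 2 * Fp x) μ := hs1sq.sub (hFi.const_mul 2)
    have int2 : Integrable (fun x => ‖S₂ x‖ ^ 2 - 2 * Gp x) μ := hs2sq.sub (hGi.const_mul 2)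
    have step5 : ∫ x, ‖S₁ x - S₂ x‖ ^ 2 ∂μ
        = ∫ x, (‖S₁ x‖ ^ 2 - 2 * Fp x) ∂μ + ∫ x, (‖S₂ x‖ ^ 2 - 2 * Gp x) ∂μ := by
      rw [← integral_add int1 int2]
      refine integral_congr_ae (ae_of_all _ fun x => ?_)
      show ‖S₁ x - S₂ x‖ ^ 2 = ‖S₁ x‖ ^ 2 - 2 * Fp x + (‖S₂ x‖ ^ 2 - 2 * Gp x)
      have e1 := hWpt x
      have e2 := hFG x
      linarith
    have big : ∫ x, ‖S₁ x - S₂ x‖ ^ 2 ∂μ ≤ ∫ p : E × E, ‖p.1 - p.2‖ ^ 2 ∂γ := by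
      rw [step5, ← hfint_eq, ← hkint_eq, ← hHeq, ← hKeq, ← step2]
      exact step1
    calc ∫⁻ x, ENNReal.ofReal (‖S₁ x - S₂ x‖ ^ 2) ∂μ
        = ENNReal.ofReal (∫ x, ‖S₁ x - S₂ x‖ ^ 2 ∂μ) := hLeq.symm
      _ ≤ ENNReal.ofReal (∫ p : E × E, ‖p.1 - p.2‖ ^ 2 ∂γ) := ENNReal.ofReal_le_ofReal big
      _ = ∫⁻ p : E × E, ENNReal.ofReal (‖p.1 - p.2‖ ^ 2) ∂γ :=
          ofReal_integral_eq_lintegral_ofReal hcint hcost0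
  -- the diagonal coupling
  have hprodm : Measurable fun x : E => (S₁ x, S₂ x) := hS₁m.prodMk hS₂m
  have hmap1 : (μ.map fun x => (S₁ x, S₂ x)).map Prod.fst = μ.map S₁ := by
    rw [Measure.map_map measurable_fst hprodm]; rfl
  have hmap2 : (μ.map fun x => (S₁ x, S₂ x)).map Prod.snd = μ.map S₂ := by
    rw [Measure.map_map measurable_snd hprodm]; rfl
  have hattain : ∫⁻ p, ENNReal.ofReal (‖p.1 - p.2‖ ^ 2) ∂(μ.map fun x => (S₁ x, S₂ x))
      = ∫⁻ x, ENNReal.ofReal (‖S₁ x - S₂ x‖ ^ 2) ∂μ := by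
    rw [lintegral_map hcostm.ennreal_ofReal hprodm]
  have hWd : ∀ x, S₁ x - S₂ x = (a₁ - a₂) • x + (b₁ - b₂) • T x := by
    intro x; rw [hS₁, hS₂, sub_smul, sub_smul]; abel
  refine ⟨?_, ?_, hmap1, hmap2, hattain⟩
  · refine le_antisymm (sInf_le ?_) (le_sInf ?_)
    · exact ⟨μ.map fun x => (S₁ x, S₂ x), Measure.isProbabilityMeasure_map hprodm.aemeasurable,
        hmap1, hmap2, hattain.symm⟩
    · rintro c ⟨γ, hγp, hg1, hg2, rfl⟩
      exact hlow γ hγp hg1 hg2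
  · exact lintegral_congr fun x => by rw [hWd x]
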